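/- For every real t ≥ 1 and every real x with x ≤ -1 or x > 0, one has (1 + 1/(t·x + t - 1))^t ≤ 1 + 1/x. -/

import Mathlib

open Real in
lemma rpow_ineq_key (t x : ℝ) (ht : 1 ≤ t)
    (hv : 1 / (t * (x + 1)) ≤ 1)
    (hx : 0 < x / (x + 1))
    (hy : 0 < (t * x + t - 1) / (t * x + t)) :
    (1 + 1 / (t * x + t - 1)) ^ t ≤ 1 + 1 / x := by
  have ht0 : (0:ℝ) < t := lt_of_lt_of_le one_pos ht
  have hx1 : x + 1 ≠ 0 := by
    intro h; rw [h] at hx; simp at hx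
  have hx0 : x ≠ 0 := by
    intro h; rw [h] at hx; simp at hx
  have hty : t * (x + 1) ≠ 0 := mul_ne_zero ht0.ne' hx1
  have hy0 : t * x + t - 1 ≠ 0 := by
    intro h; rw [h] at hy; simp at hy
  have hy1 : t * x + t ≠ 0 := by
    intro h; rw [h] at hy; simp at hy
  set s : ℝ := -(1 / (t * (x + 1))) with hs
  have hs1 : -1 ≤ s := by rw [hs]; linarith
  have hb := one_add_mul_self_le_rpow_one_add hs1 ht
  have e1 : 1 + t * s = x / (x + 1) := by
    rw [hs]; field_simp; ring
  have e2 : 1 + s = (t * x + t - 1) / (t * x + t) := by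
    rw [hs]; field_simp; ring
  rw [e1, e2] at hb
  have hinv : (((t * x + t - 1) / (t * x + t)) ^ t)⁻¹ ≤ (x / (x + 1))⁻¹ :=
    inv_anti₀ hx hb
  have e3 : (((t * x + t - 1) / (t * x + t)) ^ t)⁻¹ = (1 + 1 / (t * x + t - 1)) ^ t := by
    rw [← Real.inv_rpow hy.le]
    congr 1
    rw [inv_div]
    field_simp
    rw [one_add_div (by rw [mul_add, mul_one]; exact hy0)]; ring
  have e4 : (x / (x + 1))⁻¹ = 1 + 1 / x := by
    rw [inv_div]; field_simp
  rw [e3, e4] at hinv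
  exact hinv

theorem rpow_ineq_one (t x : ℝ) (ht : 1 ≤ t) (hx : x ≤ -1 ∨ 0 < x) :
    (1 + 1 / (t * x + t - 1)) ^ t ≤ 1 + 1 / x := by
  have ht0 : (0:ℝ) < t := lt_of_lt_of_le one_pos ht
  rcases hx with hx | hx
  · rcases eq_or_lt_of_le hx with h1 | h1
    · subst h1
      have e : t * (-1) + t - 1 = -1 := by ring
      rw [e]
      norm_num
      rw [Real.zero_rpow ht0.ne']
    · -- x < -1
      have hx1 : x + 1 < 0 := by linarith
      have hty : t * (x + 1) ≤ x + 1 := by nlinarith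
      apply rpow_ineq_key t x ht
      · have : t * (x + 1) < 0 := lt_of_le_of_lt hty hx1
        have := div_nonpos_of_nonneg_of_nonpos (zero_le_one) this.le
        linarith
      · exact div_pos_of_neg_of_neg (by linarith) hx1
      · have h2 : t * x + t < 0 := by nlinarith
        exact div_pos_of_neg_of_neg (by nlinarith) h2
  · -- 0 < x
    have hx1 : (0:ℝ) < x + 1 := by linarith
    have hty : 1 < t * (x + 1) := by nlinarith
    apply rpow_ineq_key t x ht
    · rw [div_le_one (by linarith)]; linarith
    · exact div_pos hx hx1
    · have h2 : 0 < t * x + t := by nlinarith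
      exact div_pos (by nlinarith) h2
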